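/- With Φ as above, Φ is positive definite (hence invertible) unless there exists a nonzero x ∈ ℝ^J such that the functions x_i R_i are all μ-a.s. equal to a common function, i.e. unless all the R_i are pairwise proportional μ-a.s. along some nonzero direction; equivalently, x'Φx = 0 for x ≠ 0 implies x_i R_i = x_j R_j μ-a.s. for all i < j. -/

import Mathlib

open MeasureTheory Matrix

noncomputable section

theorem stmt_6 {J : ℕ} (hJ : 0 < J) (μ : Measure ℝ) [IsProbabilityMeasure μ]
    (R : Fin J → ℝ → ℝ) (hR : ∀ i, MemLp (R i) 2 μ)
    (Φ : Matrix (Fin J) (Fin J) ℝ)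
    (hΦoff : ∀ i j, i ≠ j → Φ i j = -(2 / (J : ℝ) ^ 2) * ∫ y, R i y * R j y ∂μ)
    (hΦdiag : ∀ i, Φ i i = (2 * ((J : ℝ) - 1) / (J : ℝ) ^ 2) * ∫ y, (R i y) ^ 2 ∂μ)
    (x : Fin J → ℝ) (hx : x ≠ 0) (hxΦ : x ⬝ᵥ Φ.mulVec x = 0) :
    ∀ i j : Fin J, i < j →
      (fun y => x i * R i y) =ᵐ[μ] (fun y => x j * R j y) := by
  have hJR : (J : ℝ) ≠ 0 := Nat.cast_ne_zero.mpr hJ.ne'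
  set g : Fin J → ℝ → ℝ := fun i y => x i * R i y with hgdef
  have hgmem : ∀ i, MemLp (g i) 2 μ := fun i => (hR i).const_mul (x i)
  -- product integrability via polarization
  have hmulR : ∀ i j, Integrable (fun y => R i y * R j y) μ := by
    intro i j
    have h1 : Integrable (fun y => ((R i y + R j y) ^ 2 - R i y ^ 2 - R j y ^ 2) / 2) μ :=
      ((((hR i).add (hR j)).integrable_sq.sub (hR i).integrable_sq).sub
        (hR j).integrable_sq).div_const 2
    have : (fun y => R i y * R j y)
        = fun y => ((R i y + R j y) ^ 2 - R i y ^ 2 - R j y ^ 2) / 2 := by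
      funext y; ring
    rw [this]; exact h1
  have hmul : ∀ i j, Integrable (fun y => g i y * g j y) μ := by
    intro i j
    have : (fun y => g i y * g j y) = fun y => (x i * x j) * (R i y * R j y) := by
      funext y; simp only [hgdef]; ring
    rw [this]; exact (hmulR i j).const_mul _
  set c : Fin J → Fin J → ℝ := fun i j => ∫ y, g i y * g j y ∂μ with hcdef
  have hc : ∀ i j, c i j = x i * x j * ∫ y, R i y * R j y ∂μ := by
    intro i j
    show (∫ y, g i y * g j y ∂μ) = _
    have : (fun y => g i y * g j y) = fun y => (x i * x j) * (R i y * R j y) := by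
      funext y; simp only [hgdef]; ring
    rw [this, integral_const_mul]
  have hcsq : ∀ i, c i i = x i ^ 2 * ∫ y, (R i y) ^ 2 ∂μ := by
    intro i
    rw [hc i i]
    congr 1
    · ring
    · congr 1; funext y; ring
  -- expand the quadratic form
  have hterm : ∀ i j, x i * (Φ i j * x j)
      = 2 / (J : ℝ) ^ 2 * ((if j = i then (J : ℝ) else 0) * c i i - c i j) := by
    intro i j
    by_cases h : j = i
    · subst h
      rw [hΦdiag j, hcsq j]
      rw [if_pos rfl]
      ring
    · rw [hΦoff i j (Ne.symm h), hc i j]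
      simp only [if_neg h]
      ring
  have hquad : x ⬝ᵥ Φ.mulVec x
      = 2 / (J : ℝ) ^ 2 * ((J : ℝ) * (∑ i, c i i) - ∑ i, ∑ j, c i j) := by
    have : x ⬝ᵥ Φ.mulVec x = ∑ i, ∑ j, x i * (Φ i j * x j) := by
      simp [dotProduct, mulVec, Finset.mul_sum]
    rw [this]
    have hinner : ∀ i, ∑ j, x i * (Φ i j * x j)
        = 2 / (J : ℝ) ^ 2 * ((J : ℝ) * c i i - ∑ j, c i j) := by
      intro i
      simp only [hterm]
      rw [← Finset.mul_sum]
      congr 1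
      rw [Finset.sum_sub_distrib]
      congr 1
      simp [ite_mul, Finset.sum_ite_eq']
    simp only [hinner]
    rw [← Finset.mul_sum]
    congr 1
    rw [Finset.sum_sub_distrib, ← Finset.mul_sum]
  have hkey : (J : ℝ) * (∑ i, c i i) - ∑ i, ∑ j, c i j = 0 := by
    have h2 : (2 : ℝ) / (J : ℝ) ^ 2 ≠ 0 := by positivity
    have := hxΦ
    rw [hquad] at this
    exact (mul_eq_zero.mp this).resolve_left h2
  -- expansion of ∫ (g i - g j)^2
  have hexp : ∀ i j, ∫ y, (g i y - g j y) ^ 2 ∂μ = c i i + c j j - 2 * c i j := by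
    intro i j
    have heq : (fun y => (g i y - g j y) ^ 2)
        = fun y => (g i y * g i y + g j y * g j y) - 2 * (g i y * g j y) := by
      funext y; ring
    have hii : Integrable (fun y => g i y * g i y + g j y * g j y) μ :=
      (hmul i i).add (hmul j j)
    rw [heq, integral_sub hii ((hmul i j).const_mul 2),
      integral_add (hmul i i) (hmul j j), integral_const_mul]
  -- the double sum of squared differences is zero
  have hsum : ∑ i, ∑ j, ∫ y, (g i y - g j y) ^ 2 ∂μ = 0 := by
    simp only [hexp]
    have e1 : ∑ i : Fin J, ∑ j : Fin J, (c i i + c j j - 2 * c i j)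
        = (∑ i : Fin J, ∑ j : Fin J, c i i) + (∑ i : Fin J, ∑ j : Fin J, c j j)
          - 2 * ∑ i : Fin J, ∑ j : Fin J, c i j := by
      rw [Finset.mul_sum]
      rw [← Finset.sum_add_distrib, ← Finset.sum_sub_distrib]
      refine Finset.sum_congr rfl fun i _ => ?_
      rw [Finset.mul_sum, ← Finset.sum_add_distrib, ← Finset.sum_sub_distrib]
    rw [e1]
    have e2 : ∑ i : Fin J, ∑ j : Fin J, c i i = (J : ℝ) * ∑ i, c i i := by
      simp [Finset.sum_const, Finset.mul_sum, mul_comm]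
    have e3 : ∑ i : Fin J, ∑ j : Fin J, c j j = (J : ℝ) * ∑ i, c i i := by
      rw [Finset.sum_comm]; exact e2
    rw [e2, e3]
    nlinarith [hkey]
  -- each term is nonneg, so each is zero
  have hnonneg : ∀ i j : Fin J, 0 ≤ ∫ y, (g i y - g j y) ^ 2 ∂μ := fun i j =>
    integral_nonneg fun y => sq_nonneg _
  have hzero : ∀ i j : Fin J, ∫ y, (g i y - g j y) ^ 2 ∂μ = 0 := by
    intro i j
    have h1 := (Finset.sum_eq_zero_iff_of_nonneg
      (fun i _ => Finset.sum_nonneg fun j _ => hnonneg i j)).mp hsum i (Finset.mem_univ i)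
    exact (Finset.sum_eq_zero_iff_of_nonneg (fun j _ => hnonneg i j)).mp h1 j
      (Finset.mem_univ j)
  intro i j _
  have hint : Integrable (fun y => (g i y - g j y) ^ 2) μ :=
    ((hgmem i).sub (hgmem j)).integrable_sq
  have hae : (fun y => (g i y - g j y) ^ 2) =ᵐ[μ] 0 := by
    rw [← integral_eq_zero_iff_of_nonneg (fun y => sq_nonneg _) hint]
    exact hzero i j
  filter_upwards [hae] with y hy
  have : (g i y - g j y) ^ 2 = 0 := hy
  have := pow_eq_zero_iff (n := 2) (by norm_num) |>.mp this
  have : g i y = g j y := by linarith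
  simpa [hgdef] using this
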